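/- Let R = k[x,y] and V ⊆ R_j. For every integer s ≥ −j, τ(R_sV) ≤ τ(V), with equality if and only if the ancestor ideals coincide: \overline{R_sV} = V̄. In particular the sequence τ(R_{-j}V), ..., τ(R_{-1}V), τ(V), τ(R_1V), ... is non-decreasing up to index 0 and non-increasing from index 0 on. -/

import Mathlib

open MvPolynomial Submodule

variable {k : Type*} [Field k]

noncomputable abbrev Rh (k : Type*) [Field k] (i : ℕ) :
    Submodule k (MvPolynomial (Fin 2) k) :=
  MvPolynomial.homogeneousSubmodule (Fin 2) k i

noncomputable def mulV (i : ℕ) (V : Submodule k (MvPolynomial (Fin 2) k)) :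
    Submodule k (MvPolynomial (Fin 2) k) :=
  Submodule.span k {p | ∃ h ∈ Rh k i, ∃ f ∈ V, p = h * f}

noncomputable def divV (i j : ℕ) (V : Submodule k (MvPolynomial (Fin 2) k)) :
    Submodule k (MvPolynomial (Fin 2) k) :=
  Rh k (j - i) ⊓ ⨅ g ∈ Rh k i, Submodule.comap (LinearMap.mulLeft k g) V

/-- `R_s V` for `s : ℤ` and `V ⊆ R_j`. -/
noncomputable def opV (j : ℕ) (s : ℤ) (V : Submodule k (MvPolynomial (Fin 2) k)) :
    Submodule k (MvPolynomial (Fin 2) k) :=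
  if 0 ≤ s then mulV s.toNat V else divV (-s).toNat j V

/-- `τ(V) = dim R_1 V − dim V`. -/
noncomputable def tauZ (V : Submodule k (MvPolynomial (Fin 2) k)) : ℤ :=
  (Module.finrank k (mulV 1 V) : ℤ) - (Module.finrank k V : ℤ)

/-- The ancestor ideal of `V ⊆ R_j`. -/
noncomputable def anc (j : ℕ) (V : Submodule k (MvPolynomial (Fin 2) k)) :
    Ideal (MvPolynomial (Fin 2) k) :=
  Ideal.span (⋃ a ∈ Finset.range (j + 1), (divV a j V : Set (MvPolynomial (Fin 2) k)))

section Infra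

variable {σ : Type*}

lemma degree_single (i : σ) (m : ℕ) : (Finsupp.single i m).degree = m := by
  simp [Finsupp.degree_eq_weight_one, Finsupp.weight_apply, Finsupp.sum_single_index]

lemma degree_add (a b : σ →₀ ℕ) : (a + b).degree = a.degree + b.degree := by
  simp only [Finsupp.degree_eq_weight_one, map_add]

/-- split a degree-(a+b) exponent into degree-a and degree-b parts -/
lemma degree_split (d : σ →₀ ℕ) (a b : ℕ) (h : d.degree = a + b) :
    ∃ e f : σ →₀ ℕ, e.degree = a ∧ f.degree = b ∧ d = e + f := by
  induction a generalizing d with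
  | zero => exact ⟨0, d, by simp, by simpa using h, by simp⟩
  | succ a ih =>
    have hd : d ≠ 0 := by
      intro h0; rw [h0] at h; simp at h; omega
    obtain ⟨i, hi⟩ : ∃ i, d i ≠ 0 := by
      by_contra hc
      push_neg at hc
      exact hd (Finsupp.ext fun i => hc i)
    have hle : Finsupp.single i 1 ≤ d := by
      rw [Finsupp.single_le_iff]; omega
    set d' := d - Finsupp.single i 1 with hd'
    have hdd : d = Finsupp.single i 1 + d' := by
      rw [hd', add_comm]
      exact (tsub_add_cancel_of_le hle).symm
    have hdeg : d'.degree = a + b := by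
      have := degree_add (Finsupp.single i 1) d'
      rw [← hdd, h, degree_single] at this
      omega
    obtain ⟨e, f, he, hf, hef⟩ := ih d' hdeg
    exact ⟨Finsupp.single i 1 + e, f, by rw [degree_add, degree_single, he]; omega,
      hf, by rw [hdd, hef, add_assoc]⟩

end Infra

lemma monomial_mem_Rh {d : Fin 2 →₀ ℕ} {n : ℕ} (h : d.degree = n) (c : k) :
    (monomial d c : MvPolynomial (Fin 2) k) ∈ Rh k n :=
  (mem_homogeneousSubmodule _ _).2 (isHomogeneous_monomial _ h)

/-- workhorse: to show `Rh k n ≤ S`, enough on monomials -/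
lemma Rh_le_of_monomial_mem {n : ℕ} {S : Submodule k (MvPolynomial (Fin 2) k)}
    (h : ∀ d : Fin 2 →₀ ℕ, d.degree = n → (monomial d 1 : MvPolynomial (Fin 2) k) ∈ S) :
    Rh k n ≤ S := by
  intro p hp
  rw [p.as_sum]
  refine Submodule.sum_mem _ fun v hv => ?_
  have hdeg : v.degree = n := by
    rw [mem_homogeneousSubmodule] at hp
    rw [Finsupp.degree_eq_weight_one]
    exact hp (mem_support_iff.1 hv)
  have : (monomial v (coeff v p) : MvPolynomial (Fin 2) k) = coeff v p • monomial v 1 := by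
    rw [smul_monomial, smul_eq_mul, mul_one]
  rw [this]
  exact Submodule.smul_mem _ _ (h v hdeg)

instance Rh_finiteDimensional (n : ℕ) : FiniteDimensional k (Rh k n) := by
  have hfin : ({f : Fin 2 →₀ ℕ | f.degree ≤ n}).Finite := Finsupp.finite_of_degree_le n
  have hle : Rh k n ≤ Submodule.span k
      ((fun d => (monomial d 1 : MvPolynomial (Fin 2) k)) '' {f | f.degree ≤ n}) := by
    apply Rh_le_of_monomial_mem
    intro d hd
    exact Submodule.subset_span ⟨d, by simp [hd], rfl⟩
  have : FiniteDimensional k (Submodule.span k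
      ((fun d => (monomial d 1 : MvPolynomial (Fin 2) k)) '' {f | f.degree ≤ n})) :=
    FiniteDimensional.span_of_finite k (hfin.image _)
  exact Submodule.finiteDimensional_of_le hle


lemma mulV_eq_mul (i : ℕ) (V : Submodule k (MvPolynomial (Fin 2) k)) :
    mulV i V = Rh k i * V := by
  rw [mulV, Submodule.mul_def]
  congr 1
  ext p
  simp only [Set.mem_setOf_eq, Set.mem_mul]
  constructor
  · rintro ⟨h, hh, f, hf, rfl⟩; exact ⟨h, hh, f, hf, rfl⟩
  · rintro ⟨h, hh, f, hf, rfl⟩; exact ⟨h, hh, f, hf, rfl⟩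

lemma Rh_mul_Rh (a b : ℕ) : Rh k a * Rh k b = Rh k (a + b) := by
  apply le_antisymm
  · rw [Submodule.mul_le]
    intro m hm n hn
    rw [mem_homogeneousSubmodule] at *
    exact hm.mul hn
  · apply Rh_le_of_monomial_mem
    intro d hd
    obtain ⟨e, f, he, hf, rfl⟩ := degree_split d a b hd
    have : (monomial (e + f) (1:k) : MvPolynomial (Fin 2) k)
        = monomial e 1 * monomial f 1 := by rw [monomial_mul, one_mul]
    rw [this]
    exact Submodule.mul_mem_mul (monomial_mem_Rh he 1) (monomial_mem_Rh hf 1)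

lemma mulV_mulV (a b : ℕ) (V : Submodule k (MvPolynomial (Fin 2) k)) :
    mulV a (mulV b V) = mulV (a + b) V := by
  rw [mulV_eq_mul, mulV_eq_mul, mulV_eq_mul, ← mul_assoc, Rh_mul_Rh]

lemma one_mem_Rh_zero : (1 : MvPolynomial (Fin 2) k) ∈ Rh k 0 :=
  (mem_homogeneousSubmodule _ _).2 (isHomogeneous_one _ _)

lemma mulV_zero (V : Submodule k (MvPolynomial (Fin 2) k)) : mulV 0 V = V := by
  rw [mulV_eq_mul]
  apply le_antisymm
  · rw [Submodule.mul_le]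
    intro m hm n hn
    rw [mem_homogeneousSubmodule] at hm
    obtain ⟨c, rfl⟩ : ∃ c, m = C c := by
      have h0 := homogeneousComponent_of_mem ((mem_homogeneousSubmodule 0 m).2 hm) (m := 0)
      exact ⟨coeff 0 m, by simpa using h0.symm⟩
    rw [← smul_eq_C_mul]
    exact Submodule.smul_mem _ _ hn
  · intro v hv
    simpa using Submodule.mul_mem_mul (one_mem_Rh_zero (k := k)) hv

lemma mulV_mono (i : ℕ) {V W : Submodule k (MvPolynomial (Fin 2) k)} (h : V ≤ W) :
    mulV i V ≤ mulV i W := by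
  rw [mulV_eq_mul, mulV_eq_mul]
  exact mul_le_mul' le_rfl h

lemma mulV_le_Rh {i j : ℕ} {V : Submodule k (MvPolynomial (Fin 2) k)} (h : V ≤ Rh k j) :
    mulV i V ≤ Rh k (i + j) := by
  rw [mulV_eq_mul, ← Rh_mul_Rh]
  exact mul_le_mul' le_rfl h

lemma mem_divV {a m : ℕ} {W : Submodule k (MvPolynomial (Fin 2) k)}
    {f : MvPolynomial (Fin 2) k} :
    f ∈ divV a m W ↔ f ∈ Rh k (m - a) ∧ Rh k a * Submodule.span k {f} ≤ W := by
  rw [divV, Submodule.mem_inf]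
  apply and_congr_right'
  simp only [Submodule.mem_iInf, Submodule.mem_comap, LinearMap.mulLeft_apply]
  constructor
  · intro h
    rw [Submodule.mul_le]
    intro g hg n hn
    obtain ⟨c, rfl⟩ := Submodule.mem_span_singleton.1 hn
    rw [mul_smul_comm]
    exact Submodule.smul_mem _ _ (h g hg)
  · intro h g hg
    exact Submodule.mul_le.1 h g hg f (Submodule.mem_span_singleton_self f)

lemma divV_le_Rh (a m : ℕ) (W : Submodule k (MvPolynomial (Fin 2) k)) :
    divV a m W ≤ Rh k (m - a) := fun _ hf => (mem_divV.1 hf).1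

lemma mulV_divV_le (a m : ℕ) (W : Submodule k (MvPolynomial (Fin 2) k)) :
    mulV a (divV a m W) ≤ W := by
  rw [mulV_eq_mul, Submodule.mul_le]
  intro g hg f hf
  exact Submodule.mul_le.1 (mem_divV.1 hf).2 g hg f (Submodule.mem_span_singleton_self f)

lemma divV_zero {m : ℕ} {W : Submodule k (MvPolynomial (Fin 2) k)} (h : W ≤ Rh k m) :
    divV 0 m W = W := by
  apply le_antisymm
  · intro f hf
    have := Submodule.mul_le.1 (mem_divV.1 hf).2 1 one_mem_Rh_zero f
      (Submodule.mem_span_singleton_self f)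
    simpa using this
  · intro f hf
    rw [mem_divV]
    refine ⟨by simpa using h hf, ?_⟩
    calc Rh k 0 * Submodule.span k {f} ≤ Rh k 0 * W :=
          mul_le_mul' le_rfl ((Submodule.span_singleton_le_iff_mem _ _).2 hf)
      _ = W := by rw [← mulV_eq_mul, mulV_zero]


lemma fin2_eq (d : Fin 2 →₀ ℕ) : d = Finsupp.single 0 (d 0) + Finsupp.single 1 (d 1) := by
  ext i
  fin_cases i <;> simp [Finsupp.single_apply]

lemma degree_fin2 (d : Fin 2 →₀ ℕ) : d.degree = d 0 + d 1 := by
  conv_lhs => rw [fin2_eq d]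
  rw [degree_add, degree_single, degree_single]

lemma X_mem_Rh_one (i : Fin 2) : (X i : MvPolynomial (Fin 2) k) ∈ Rh k 1 :=
  (mem_homogeneousSubmodule _ _).2 (isHomogeneous_X _ _)

lemma Rh_one_eq_span :
    Rh k 1 = Submodule.span k {(X 0 : MvPolynomial (Fin 2) k), X 1} := by
  apply le_antisymm
  · apply Rh_le_of_monomial_mem
    intro d hd
    have h2 := degree_fin2 d
    rcases (by omega : d 0 = 1 ∧ d 1 = 0 ∨ d 0 = 0 ∧ d 1 = 1) with ⟨h0, h1⟩ | ⟨h0, h1⟩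
    · have : d = Finsupp.single 0 1 := by rw [fin2_eq d, h0, h1]; simp
      rw [this]
      exact Submodule.subset_span (Or.inl rfl)
    · have : d = Finsupp.single 1 1 := by rw [fin2_eq d, h0, h1]; simp
      rw [this]
      exact Submodule.subset_span (Or.inr rfl)
  · rw [Submodule.span_le]
    rintro p (rfl | rfl)
    · exact X_mem_Rh_one 0
    · exact X_mem_Rh_one 1

lemma prime_X_fin2 (i : Fin 2) : Prime (X i : MvPolynomial (Fin 2) k) := by
  have h0 : Prime (X 0 : MvPolynomial (Fin 2) k) := by
    rw [← MulEquiv.prime_iff (finSuccEquiv k 1).toRingEquiv.toMulEquiv]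
    have : (finSuccEquiv k 1) (X 0) = Polynomial.X := finSuccEquiv_X_zero
    rw [show ((finSuccEquiv k 1).toRingEquiv.toMulEquiv (X 0)) = Polynomial.X from this]
    exact Polynomial.prime_X
  have e := renameEquiv k (Equiv.swap (0 : Fin 2) i)
  have h : Prime ((renameEquiv k (Equiv.swap (0 : Fin 2) i)).toRingEquiv.toMulEquiv
      (X 0 : MvPolynomial (Fin 2) k)) :=
    (MulEquiv.prime_iff (renameEquiv k (Equiv.swap (0 : Fin 2) i)).toRingEquiv.toMulEquiv).2 h0
  simpa [renameEquiv, Equiv.swap_apply_left] using h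


lemma mul_mem_Rh {a b : ℕ} {g f : MvPolynomial (Fin 2) k} (hg : g ∈ Rh k a)
    (hf : f ∈ Rh k b) : g * f ∈ Rh k (a + b) :=
  (mem_homogeneousSubmodule _ _).2
    (((mem_homogeneousSubmodule _ _).1 hg).mul ((mem_homogeneousSubmodule _ _).1 hf))

lemma homogeneousComponent_homog_mul {e n : ℕ} {g : MvPolynomial (Fin 2) k}
    (hg : g ∈ Rh k e) (q : MvPolynomial (Fin 2) k) :
    homogeneousComponent n (g * q) =
      if e ≤ n then g * homogeneousComponent (n - e) q else 0 := by
  classical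
  have step2 : homogeneousComponent n (g * q) = ∑ i ∈ Finset.range (q.totalDegree + 1),
      homogeneousComponent n (g * homogeneousComponent i q) := by
    rw [show g * q = ∑ i ∈ Finset.range (q.totalDegree + 1),
      g * homogeneousComponent i q by rw [← Finset.mul_sum, sum_homogeneousComponent],
      map_sum]
  have step3 : ∀ i, homogeneousComponent n (g * homogeneousComponent i q) =
      if n = e + i then g * homogeneousComponent i q else 0 := fun i =>
    homogeneousComponent_of_mem (mul_mem_Rh hg (homogeneousComponent_mem i q))
  rw [step2]
  simp_rw [step3]
  by_cases he : e ≤ n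
  · by_cases hN : n - e ≤ q.totalDegree
    · rw [Finset.sum_eq_single (n - e)]
      · rw [if_pos (by omega), if_pos he]
      · intro i _ hne; rw [if_neg (by omega)]
      · intro h; exact absurd (Finset.mem_range.2 (by omega)) h
    · rw [if_pos he, homogeneousComponent_eq_zero _ q (by omega), mul_zero]
      apply Finset.sum_eq_zero; intro i hi
      rw [Finset.mem_range] at hi
      rw [if_neg (by omega)]
  · rw [if_neg he]
    apply Finset.sum_eq_zero; intro i _
    rw [if_neg (by omega)]

lemma X_ne_zero' (i : Fin 2) : (X i : MvPolynomial (Fin 2) k) ≠ 0 :=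
  MvPolynomial.X_ne_zero i

/-- if `X i * w` is homogeneous of degree `n`, then `w ∈ Rh (n-1)`;
moreover if `n = 0` then `w = 0`. -/
lemma homog_of_X_mul {i : Fin 2} {w : MvPolynomial (Fin 2) k} {n : ℕ}
    (h : X i * w ∈ Rh k n) : w ∈ Rh k (n - 1) := by
  have hx : (X i : MvPolynomial (Fin 2) k) ∈ Rh k 1 :=
    (mem_homogeneousSubmodule _ _).2 (isHomogeneous_X _ _)
  have hc := homogeneousComponent_of_mem h (m := n)
  rw [if_pos rfl, homogeneousComponent_homog_mul hx w] at hc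
  by_cases hn : 1 ≤ n
  · rw [if_pos hn] at hc
    have := mul_left_cancel₀ (X_ne_zero' i) hc
    rw [← this]
    exact homogeneousComponent_mem _ _
  · rw [if_neg hn] at hc
    have hw : w = 0 := by
      rcases mul_eq_zero.1 hc.symm with h' | h'
      · exact absurd h' (X_ne_zero' i)
      · exact h'
    rw [hw]; exact Submodule.zero_mem _


lemma fd_of_le {n : ℕ} {V : Submodule k (MvPolynomial (Fin 2) k)} (h : V ≤ Rh k n) :
    FiniteDimensional k V :=
  Submodule.finiteDimensional_of_le h

lemma mulLeft_injective {p : MvPolynomial (Fin 2) k} (hp : p ≠ 0) :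
    Function.Injective (LinearMap.mulLeft k p) := fun a b h =>
  mul_left_cancel₀ hp h

lemma finrank_map_mulLeft {p : MvPolynomial (Fin 2) k} (hp : p ≠ 0)
    (W : Submodule k (MvPolynomial (Fin 2) k)) :
    Module.finrank k (Submodule.map (LinearMap.mulLeft k p) W) = Module.finrank k W :=
  (LinearEquiv.finrank_eq (Submodule.equivMapOfInjective _ (mulLeft_injective hp) W)).symm

lemma mulV_one_eq (W : Submodule k (MvPolynomial (Fin 2) k)) :
    mulV 1 W = Submodule.map (LinearMap.mulLeft k (X 0)) W
      ⊔ Submodule.map (LinearMap.mulLeft k (X 1)) W := by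
  rw [mulV_eq_mul, Rh_one_eq_span]
  apply le_antisymm
  · rw [Submodule.mul_le]
    intro m hm n hn
    refine Submodule.span_induction ?_ ?_ ?_ ?_ hm
    · rintro p (rfl | rfl)
      · exact Submodule.mem_sup_left ⟨n, hn, rfl⟩
      · exact Submodule.mem_sup_right ⟨n, hn, rfl⟩
    · simp
    · intro p q _ _ hp hq
      rw [add_mul]; exact Submodule.add_mem _ hp hq
    · intro c p _ hp
      rw [smul_mul_assoc]; exact Submodule.smul_mem _ _ hp
  · apply sup_le
    · rintro p ⟨w, hw, rfl⟩
      exact Submodule.mul_mem_mul (Submodule.subset_span (Or.inl rfl)) hw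
    · rintro p ⟨w, hw, rfl⟩
      exact Submodule.mul_mem_mul (Submodule.subset_span (Or.inr rfl)) hw

lemma mem_divV_one {m : ℕ} {W : Submodule k (MvPolynomial (Fin 2) k)}
    {f : MvPolynomial (Fin 2) k} :
    f ∈ divV 1 m W ↔ f ∈ Rh k (m - 1) ∧ X 0 * f ∈ W ∧ X 1 * f ∈ W := by
  rw [mem_divV]
  apply and_congr_right'
  constructor
  · intro h
    exact ⟨Submodule.mul_le.1 h _ (X_mem_Rh_one 0) f (Submodule.mem_span_singleton_self f),
      Submodule.mul_le.1 h _ (X_mem_Rh_one 1) f (Submodule.mem_span_singleton_self f)⟩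
  · rintro ⟨h0, h1⟩
    rw [Rh_one_eq_span, Submodule.mul_le]
    intro g hg n hn
    obtain ⟨c, rfl⟩ := Submodule.mem_span_singleton.1 hn
    rw [mul_smul_comm]
    refine Submodule.smul_mem _ _ ?_
    refine Submodule.span_induction ?_ (by simp) ?_ ?_ hg
    · rintro p (rfl | rfl)
      · exact h0
      · exact h1
    · intro p q _ _ hp hq; rw [add_mul]; exact Submodule.add_mem _ hp hq
    · intro c p _ hp; rw [smul_mul_assoc]; exact Submodule.smul_mem _ _ hp

lemma map_inf_eq {m : ℕ} {W : Submodule k (MvPolynomial (Fin 2) k)} (hW : W ≤ Rh k m) :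
    Submodule.map (LinearMap.mulLeft k (X 0)) W ⊓ Submodule.map (LinearMap.mulLeft k (X 1)) W
      = Submodule.map (LinearMap.mulLeft k (X 0 * X 1)) (divV 1 m W) := by
  apply le_antisymm
  · rintro p ⟨⟨u, hu, hup⟩, ⟨v, hv, hvp⟩⟩
    simp only [LinearMap.mulLeft_apply] at hup hvp
    -- X 0 * u = p = X 1 * v
    have hdvd : (X 1 : MvPolynomial (Fin 2) k) ∣ u := by
      have h1 : (X 1 : MvPolynomial (Fin 2) k) ∣ X 0 * u := ⟨v, by rw [hup, ← hvp]⟩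
      rcases (prime_X_fin2 1).2.2 _ _ h1 with h | h
      · exfalso
        rw [X_dvd_X] at h
        exact absurd h (by decide)
      · exact h
    obtain ⟨w, rfl⟩ := hdvd
    have hwdiv : w ∈ divV 1 m W := by
      rw [mem_divV_one]
      refine ⟨homog_of_X_mul (hW hu), ?_, hu⟩
      have : v = X 0 * w := by
        apply mul_left_cancel₀ (X_ne_zero' (k := k) 1)
        rw [hvp, ← hup]; ring
      rw [← this]; exact hv
    refine ⟨w, hwdiv, ?_⟩
    simp only [LinearMap.mulLeft_apply]
    rw [← hup]; ring
  · rintro p ⟨w, hw, rfl⟩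
    rw [SetLike.mem_coe, mem_divV_one] at hw
    simp only [LinearMap.mulLeft_apply]
    constructor
    · exact ⟨X 1 * w, hw.2.2, by simp only [LinearMap.mulLeft_apply]; ring⟩
    · exact ⟨X 0 * w, hw.2.1, by simp only [LinearMap.mulLeft_apply]; ring⟩

/-- The core identity: `dim R₁W + dim R₋₁W = 2 dim W` in two variables. -/
lemma core_identity {m : ℕ} {W : Submodule k (MvPolynomial (Fin 2) k)} (hW : W ≤ Rh k m) :
    Module.finrank k (mulV 1 W) + Module.finrank k (divV 1 m W)
      = 2 * Module.finrank k W := by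
  haveI : FiniteDimensional k W := fd_of_le hW
  haveI : FiniteDimensional k (Submodule.map (LinearMap.mulLeft k (X 0)) W) :=
    Module.Finite.map _ _
  haveI : FiniteDimensional k (Submodule.map (LinearMap.mulLeft k (X 1)) W) :=
    Module.Finite.map _ _
  have hsum := Submodule.finrank_sup_add_finrank_inf_eq
    (Submodule.map (LinearMap.mulLeft k (X 0)) W)
    (Submodule.map (LinearMap.mulLeft k (X 1)) W)
  have hxy : (X 0 * X 1 : MvPolynomial (Fin 2) k) ≠ 0 :=
    mul_ne_zero (X_ne_zero' 0) (X_ne_zero' 1)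
  rw [map_inf_eq hW, ← mulV_one_eq, finrank_map_mulLeft hxy,
    finrank_map_mulLeft (X_ne_zero' 0), finrank_map_mulLeft (X_ne_zero' 1)] at hsum
  omega


lemma mulV_one_le_Rh {m : ℕ} {W : Submodule k (MvPolynomial (Fin 2) k)} (hW : W ≤ Rh k m) :
    mulV 1 W ≤ Rh k (m + 1) := by
  have := mulV_le_Rh (i := 1) hW
  rwa [Nat.add_comm] at this

lemma tauZ_eq_sub {m : ℕ} {W : Submodule k (MvPolynomial (Fin 2) k)} (hW : W ≤ Rh k m) :
    tauZ W = (Module.finrank k W : ℤ) - Module.finrank k (divV 1 m W) := by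
  have h := core_identity hW
  rw [tauZ]
  omega

lemma le_divV_mulV {m : ℕ} {W : Submodule k (MvPolynomial (Fin 2) k)} (hW : W ≤ Rh k m) :
    W ≤ divV 1 (m + 1) (mulV 1 W) := by
  intro f hf
  rw [mem_divV_one]
  refine ⟨by simpa using hW hf, ?_, ?_⟩
  · rw [mulV_eq_mul]; exact Submodule.mul_mem_mul (X_mem_Rh_one 0) hf
  · rw [mulV_eq_mul]; exact Submodule.mul_mem_mul (X_mem_Rh_one 1) hf

lemma tau_step_up {m : ℕ} {W : Submodule k (MvPolynomial (Fin 2) k)} (hW : W ≤ Rh k m) :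
    tauZ (mulV 1 W) ≤ tauZ W ∧
      (tauZ (mulV 1 W) = tauZ W ↔ divV 1 (m + 1) (mulV 1 W) = W) := by
  haveI := fd_of_le hW
  haveI := fd_of_le (mulV_one_le_Rh hW)
  haveI := fd_of_le (divV_le_Rh 1 (m + 1) (mulV 1 W))
  have key := tauZ_eq_sub (mulV_one_le_Rh hW)
  have hle : W ≤ divV 1 (m + 1) (mulV 1 W) := le_divV_mulV hW
  have hrank : Module.finrank k W ≤ Module.finrank k (divV 1 (m + 1) (mulV 1 W)) :=
    Submodule.finrank_mono hle
  constructor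
  · rw [key, tauZ]; omega
  · constructor
    · intro h
      rw [key, tauZ] at h
      refine (Submodule.eq_of_le_of_finrank_le hle ?_).symm
      omega
    · intro h
      rw [key, h, tauZ]

lemma tau_step_down {m : ℕ} {W : Submodule k (MvPolynomial (Fin 2) k)} (hW : W ≤ Rh k m) :
    tauZ (divV 1 m W) ≤ tauZ W ∧
      (tauZ (divV 1 m W) = tauZ W ↔ mulV 1 (divV 1 m W) = W) := by
  haveI := fd_of_le hW
  haveI := fd_of_le (divV_le_Rh 1 m W)
  haveI := fd_of_le (le_trans (mulV_divV_le 1 m W) hW)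
  have key := tauZ_eq_sub hW
  have hle : mulV 1 (divV 1 m W) ≤ W := mulV_divV_le 1 m W
  have hrank : Module.finrank k (mulV 1 (divV 1 m W)) ≤ Module.finrank k W :=
    Submodule.finrank_mono hle
  constructor
  · rw [key, tauZ]; omega
  · constructor
    · intro h
      rw [key, tauZ] at h
      exact Submodule.eq_of_le_of_finrank_le hle (by omega)
    · intro h
      rw [key, tauZ, h]


lemma Rh_one_mul_span (f : MvPolynomial (Fin 2) k) :
    Rh k 1 * Submodule.span k {f} = Submodule.span k {X 0 * f, X 1 * f} := by
  rw [Rh_one_eq_span, Submodule.span_mul_span]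
  congr 1
  rw [Set.mul_singleton, Set.image_pair]

lemma opV_zero (j : ℕ) (V : Submodule k (MvPolynomial (Fin 2) k)) : opV j 0 V = V := by
  rw [opV, if_pos le_rfl, Int.toNat_zero, mulV_zero]

lemma opV_nonneg {s : ℤ} (hs : 0 ≤ s) (j : ℕ) (V : Submodule k (MvPolynomial (Fin 2) k)) :
    opV j s V = mulV s.toNat V := by rw [opV, if_pos hs]

lemma opV_neg {s : ℤ} (hs : s < 0) (j : ℕ) (V : Submodule k (MvPolynomial (Fin 2) k)) :
    opV j s V = divV (-s).toNat j V := by rw [opV, if_neg (by omega)]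

lemma Rh_congr {a b : ℕ} (h : a = b) : Rh k a = Rh k b := by rw [h]

lemma opV_le_Rh {j : ℕ} {V : Submodule k (MvPolynomial (Fin 2) k)} (hV : V ≤ Rh k j)
    {s : ℤ} (hs : -(j : ℤ) ≤ s) : opV j s V ≤ Rh k ((j : ℤ) + s).toNat := by
  by_cases h : 0 ≤ s
  · rw [opV_nonneg h]
    refine le_trans (mulV_le_Rh hV) (le_of_eq (Rh_congr (by omega)))
  · rw [opV_neg (by omega)]
    refine le_trans (divV_le_Rh _ _ _) (le_of_eq (Rh_congr (by omega)))

/-- `R_{-(b+1)}V = R_{-1}(R_{-b}V)` -/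
lemma divV_succ {b j : ℕ} (hb : b + 1 ≤ j) (V : Submodule k (MvPolynomial (Fin 2) k)) :
    divV (b + 1) j V = divV 1 (j - b) (divV b j V) := by
  ext f
  rw [mem_divV, mem_divV_one]
  constructor
  · rintro ⟨hf, hmul⟩
    have hf' : f ∈ Rh k (j - b - 1) := by
      refine le_of_eq (Rh_congr (by omega)) hf
    have key : ∀ i : Fin 2, X i * f ∈ divV b j V := by
      intro i
      rw [mem_divV]
      constructor
      · exact le_of_eq (Rh_congr (by omega)) (mul_mem_Rh (X_mem_Rh_one i) hf')
      · have h1 : Submodule.span k {X i * f} ≤ Rh k 1 * Submodule.span k {f} :=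
          (Submodule.span_singleton_le_iff_mem _ _).2
            (Submodule.mul_mem_mul (X_mem_Rh_one i) (Submodule.mem_span_singleton_self f))
        calc Rh k b * Submodule.span k {X i * f}
            ≤ Rh k b * (Rh k 1 * Submodule.span k {f}) := mul_le_mul' le_rfl h1
          _ = Rh k (b + 1) * Submodule.span k {f} := by rw [← mul_assoc, Rh_mul_Rh]
          _ ≤ V := hmul
    exact ⟨hf', key 0, key 1⟩
  · rintro ⟨hf, h0, h1⟩
    refine ⟨le_of_eq (Rh_congr (by omega)) hf, ?_⟩
    have : Rh k (b + 1) * Submodule.span k {f}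
        = Rh k b * (Rh k 1 * Submodule.span k {f}) := by rw [← mul_assoc, Rh_mul_Rh]
    rw [this, Rh_one_mul_span]
    have hspan : Submodule.span k {X 0 * f, X 1 * f} ≤ divV b j V := by
      rw [Submodule.span_le]
      rintro p (rfl | rfl)
      · exact h0
      · exact h1
    calc Rh k b * Submodule.span k {X 0 * f, X 1 * f}
        ≤ Rh k b * divV b j V := mul_le_mul' le_rfl hspan
      _ ≤ V := by rw [← mulV_eq_mul]; exact mulV_divV_le b j V

/-- `R_{-(c+1)}W = R_{-c}(R_{-1}W)` -/
lemma divV_one_step {c m : ℕ} (hc : c + 1 ≤ m) (W : Submodule k (MvPolynomial (Fin 2) k)) :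
    divV c (m - 1) (divV 1 m W) = divV (c + 1) m W := by
  ext f
  rw [mem_divV, mem_divV]
  have hdeg : m - 1 - c = m - (c + 1) := by omega
  constructor
  · rintro ⟨hf, hmul⟩
    refine ⟨le_of_eq (Rh_congr hdeg) hf, ?_⟩
    have : Rh k (c + 1) * Submodule.span k {f}
        = Rh k 1 * (Rh k c * Submodule.span k {f}) := by
      rw [← mul_assoc, Rh_mul_Rh, Nat.add_comm]
    rw [this]
    calc Rh k 1 * (Rh k c * Submodule.span k {f})
        ≤ Rh k 1 * divV 1 m W := mul_le_mul' le_rfl hmul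
      _ ≤ W := by rw [← mulV_eq_mul]; exact mulV_divV_le 1 m W
  · rintro ⟨hf, hmul⟩
    refine ⟨le_of_eq (Rh_congr hdeg.symm) hf, ?_⟩
    rw [Submodule.mul_le]
    intro g hg n hn
    obtain ⟨a, rfl⟩ := Submodule.mem_span_singleton.1 hn
    rw [mul_smul_comm]
    refine Submodule.smul_mem _ _ ?_
    rw [mem_divV]
    constructor
    · exact le_of_eq (Rh_congr (by omega)) (mul_mem_Rh hg hf)
    · have h1 : Submodule.span k {g * f} ≤ Rh k c * Submodule.span k {f} :=
        (Submodule.span_singleton_le_iff_mem _ _).2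
          (Submodule.mul_mem_mul hg (Submodule.mem_span_singleton_self f))
      calc Rh k 1 * Submodule.span k {g * f}
          ≤ Rh k 1 * (Rh k c * Submodule.span k {f}) := mul_le_mul' le_rfl h1
        _ = Rh k (c + 1) * Submodule.span k {f} := by
            rw [← mul_assoc, Rh_mul_Rh, Nat.add_comm]
        _ ≤ W := hmul


lemma mulV_congr {a b : ℕ} (h : a = b) (W : Submodule k (MvPolynomial (Fin 2) k)) :
    mulV a W = mulV b W := by rw [h]

lemma Rh_mul_W_eq_mulV (e : ℕ) (W : Submodule k (MvPolynomial (Fin 2) k)) :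
    Rh k e * W = mulV e W := (mulV_eq_mul e W).symm

lemma Rh_mul_divV_le_mulV {e a m : ℕ} (hea : a ≤ e)
    (W : Submodule k (MvPolynomial (Fin 2) k)) :
    Rh k e * divV a m W ≤ mulV (e - a) W := by
  have : Rh k e = Rh k (e - a) * Rh k a := by rw [Rh_mul_Rh]; exact Rh_congr (by omega)
  rw [this, mul_assoc]
  calc Rh k (e - a) * (Rh k a * divV a m W)
      ≤ Rh k (e - a) * W := mul_le_mul' le_rfl
        (by rw [← mulV_eq_mul]; exact mulV_divV_le a m W)
    _ = mulV (e - a) W := Rh_mul_W_eq_mulV _ _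

lemma Rh_mul_divV_le_divV {e a m : ℕ} (hea : e ≤ a) (ham : a ≤ m)
    (W : Submodule k (MvPolynomial (Fin 2) k)) :
    Rh k e * divV a m W ≤ divV (a - e) m W := by
  rw [Submodule.mul_le]
  intro g hg f hf
  rw [mem_divV] at hf ⊢
  obtain ⟨hf1, hf2⟩ := hf
  constructor
  · exact le_of_eq (Rh_congr (by omega)) (mul_mem_Rh hg hf1)
  · have h1 : Submodule.span k {g * f} ≤ Rh k e * Submodule.span k {f} :=
      (Submodule.span_singleton_le_iff_mem _ _).2
        (Submodule.mul_mem_mul hg (Submodule.mem_span_singleton_self f))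
    calc Rh k (a - e) * Submodule.span k {g * f}
        ≤ Rh k (a - e) * (Rh k e * Submodule.span k {f}) := mul_le_mul' le_rfl h1
      _ = Rh k a * Submodule.span k {f} := by
          rw [← mul_assoc, Rh_mul_Rh]; congr 1; exact Rh_congr (by omega)
      _ ≤ W := hf2

lemma Rh_mul_opV_le {m : ℕ} {W : Submodule k (MvPolynomial (Fin 2) k)} {s : ℤ}
    (hs : -(m : ℤ) ≤ s) (e : ℕ) :
    Rh k e * opV m s W ≤ opV m (s + e) W := by
  by_cases h0 : 0 ≤ s
  · rw [opV_nonneg h0, opV_nonneg (by omega), Rh_mul_W_eq_mulV, mulV_mulV]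
    exact le_of_eq (mulV_congr (by omega) W)
  · push_neg at h0
    rw [opV_neg h0]
    by_cases h1 : 0 ≤ s + (e : ℤ)
    · rw [opV_nonneg h1]
      refine le_trans (Rh_mul_divV_le_mulV (by omega) W) (le_of_eq (mulV_congr (by omega) W))
    · push_neg at h1
      rw [opV_neg h1]
      have := Rh_mul_divV_le_divV (e := e) (a := (-s).toNat) (m := m) (by omega) (by omega) W
      refine le_trans this (le_of_eq ?_)
      congr 1
      omega

/-- the degree-`d` component of the ancestor ideal -/
noncomputable def ancCmp (m : ℕ) (W : Submodule k (MvPolynomial (Fin 2) k)) (d : ℕ) :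
    Submodule k (MvPolynomial (Fin 2) k) :=
  opV m ((d : ℤ) - m) W

lemma cmp_le_Rh {m : ℕ} {W : Submodule k (MvPolynomial (Fin 2) k)} (hW : W ≤ Rh k m)
    (d : ℕ) : ancCmp m W d ≤ Rh k d := by
  refine le_trans (opV_le_Rh hW (by omega)) (le_of_eq (Rh_congr (by omega)))

lemma Rh_mul_cmp {m : ℕ} {W : Submodule k (MvPolynomial (Fin 2) k)} (e d : ℕ) :
    Rh k e * ancCmp m W d ≤ ancCmp m W (d + e) := by
  refine le_trans (Rh_mul_opV_le (by omega) e) (le_of_eq ?_)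
  rw [ancCmp]
  congr 1
  omega

lemma cmp_of_divV {a m : ℕ} (ha : a ≤ m) {W : Submodule k (MvPolynomial (Fin 2) k)}
    (hW : W ≤ Rh k m) : ancCmp m W (m - a) = divV a m W := by
  rcases Nat.eq_zero_or_pos a with rfl | hpos
  · rw [ancCmp, divV_zero hW, show ((m - 0 : ℕ) : ℤ) - m = 0 by omega, opV_zero]
  · rw [ancCmp, opV_neg (by omega)]
    congr 1
    omega

lemma cmp_of_mulV {m d : ℕ} (h : m ≤ d) (W : Submodule k (MvPolynomial (Fin 2) k)) :
    ancCmp m W d = mulV (d - m) W := by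
  rw [ancCmp, opV_nonneg (by omega)]
  exact mulV_congr (by omega) W

lemma cmp_self {m : ℕ} {W : Submodule k (MvPolynomial (Fin 2) k)} :
    ancCmp m W m = W := by
  rw [ancCmp, sub_self, opV_zero]

lemma anc_component {m : ℕ} {W : Submodule k (MvPolynomial (Fin 2) k)} (hW : W ≤ Rh k m)
    {p : MvPolynomial (Fin 2) k} (hp : p ∈ anc m W) (d : ℕ) :
    homogeneousComponent d p ∈ ancCmp m W d := by
  refine Submodule.span_induction (p := fun x _ => ∀ d, homogeneousComponent d x ∈ ancCmp m W d)
    ?_ ?_ ?_ ?_ hp d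
  · -- generators
    intro q hq d
    simp only [Set.mem_iUnion, SetLike.mem_coe] at hq
    obtain ⟨a, ha, hqa⟩ := hq
    rw [Finset.mem_range] at ha
    have hqh : q ∈ Rh k (m - a) := divV_le_Rh a m W hqa
    rw [homogeneousComponent_of_mem hqh]
    by_cases hd : d = m - a
    · rw [if_pos hd, hd, cmp_of_divV (by omega) hW]
      exact hqa
    · rw [if_neg hd]; exact Submodule.zero_mem _
  · intro d; simp only [map_zero]; exact Submodule.zero_mem _
  · intro x y _ _ hx hy d
    rw [map_add]; exact Submodule.add_mem _ (hx d) (hy d)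
  · intro r x _ hx d
    rw [smul_eq_mul]
    have step : homogeneousComponent d (r * x) = ∑ e ∈ Finset.range (r.totalDegree + 1),
        homogeneousComponent d (homogeneousComponent e r * x) := by
      rw [show r * x = ∑ e ∈ Finset.range (r.totalDegree + 1),
        homogeneousComponent e r * x by rw [← Finset.sum_mul, sum_homogeneousComponent],
        map_sum]
    rw [step]
    refine Submodule.sum_mem _ fun e _ => ?_
    rw [homogeneousComponent_homog_mul (homogeneousComponent_mem e r) x]
    by_cases he : e ≤ d
    · rw [if_pos he]
      have hmem : homogeneousComponent e r * homogeneousComponent (d - e) x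
          ∈ Rh k e * ancCmp m W (d - e) :=
        Submodule.mul_mem_mul (homogeneousComponent_mem e r) (hx (d - e))
      have := Rh_mul_cmp (m := m) (W := W) e (d - e) hmem
      rwa [show d - e + e = d by omega] at this
    · rw [if_neg he]; exact Submodule.zero_mem _

lemma cmp_le_anc {m : ℕ} {W : Submodule k (MvPolynomial (Fin 2) k)} (hW : W ≤ Rh k m)
    (d : ℕ) : ancCmp m W d ≤ Submodule.restrictScalars k (anc m W) := by
  by_cases hd : d ≤ m
  · have : ancCmp m W d = divV (m - d) m W := by
      rw [← cmp_of_divV (a := m - d) (by omega) hW, show m - (m - d) = d by omega]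
    rw [this]
    intro f hf
    refine Ideal.subset_span ?_
    simp only [Set.mem_iUnion, SetLike.mem_coe]
    exact ⟨m - d, Finset.mem_range.2 (by omega), hf⟩
  · rw [cmp_of_mulV (by omega) W, mulV]
    rw [Submodule.span_le]
    rintro p ⟨h, _, f, hf, rfl⟩
    have hfanc : f ∈ anc m W := Ideal.subset_span (by
      simp only [Set.mem_iUnion, SetLike.mem_coe]
      exact ⟨0, Finset.mem_range.2 (by omega), by rw [divV_zero hW]; exact hf⟩)
    exact Ideal.mul_mem_left _ h hfanc

lemma mem_anc_iff_of_homog {m d : ℕ} {W : Submodule k (MvPolynomial (Fin 2) k)}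
    (hW : W ≤ Rh k m) {p : MvPolynomial (Fin 2) k} (hp : p ∈ Rh k d) :
    p ∈ anc m W ↔ p ∈ ancCmp m W d := by
  constructor
  · intro h
    have := anc_component hW h d
    rwa [homogeneousComponent_of_mem hp, if_pos rfl] at this
  · intro h
    exact cmp_le_anc hW d h

lemma anc_eq_iff {m1 m2 : ℕ} {W1 W2 : Submodule k (MvPolynomial (Fin 2) k)}
    (h1 : W1 ≤ Rh k m1) (h2 : W2 ≤ Rh k m2) :
    anc m1 W1 = anc m2 W2 ↔ ∀ d, ancCmp m1 W1 d = ancCmp m2 W2 d := by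
  constructor
  · intro h d
    apply le_antisymm
    · intro p hp
      rw [← mem_anc_iff_of_homog h2 (cmp_le_Rh h1 d hp), ← h]
      exact (mem_anc_iff_of_homog h1 (cmp_le_Rh h1 d hp)).2 hp
    · intro p hp
      rw [← mem_anc_iff_of_homog h1 (cmp_le_Rh h2 d hp), h]
      exact (mem_anc_iff_of_homog h2 (cmp_le_Rh h2 d hp)).2 hp
  · intro h
    apply le_antisymm
    · rw [anc, Ideal.span_le]
      intro p hp
      simp only [Set.mem_iUnion, SetLike.mem_coe] at hp
      obtain ⟨a, ha, hpa⟩ := hp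
      rw [Finset.mem_range] at ha
      have : p ∈ ancCmp m1 W1 (m1 - a) := by rw [cmp_of_divV (by omega) h1]; exact hpa
      rw [h (m1 - a)] at this
      exact cmp_le_anc h2 _ this
    · rw [anc, Ideal.span_le]
      intro p hp
      simp only [Set.mem_iUnion, SetLike.mem_coe] at hp
      obtain ⟨a, ha, hpa⟩ := hp
      rw [Finset.mem_range] at ha
      have : p ∈ ancCmp m2 W2 (m2 - a) := by rw [cmp_of_divV (by omega) h2]; exact hpa
      rw [← h (m2 - a)] at this
      exact cmp_le_anc h1 _ this


lemma divV_congr {a b m n : ℕ} (h1 : a = b) (h2 : m = n)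
    (W : Submodule k (MvPolynomial (Fin 2) k)) : divV a m W = divV b n W := by rw [h1, h2]

lemma divV_le_divV_succ_mulV {a m : ℕ} (W : Submodule k (MvPolynomial (Fin 2) k)) :
    divV a m W ≤ divV (a + 1) (m + 1) (mulV 1 W) := by
  intro f hf
  rw [mem_divV] at hf ⊢
  obtain ⟨hf1, hf2⟩ := hf
  refine ⟨le_of_eq (Rh_congr (by omega)) hf1, ?_⟩
  have : Rh k (a + 1) * Submodule.span k {f}
      = Rh k 1 * (Rh k a * Submodule.span k {f}) := by
    rw [← mul_assoc, Rh_mul_Rh, Nat.add_comm]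
  rw [this]
  calc Rh k 1 * (Rh k a * Submodule.span k {f})
      ≤ Rh k 1 * W := mul_le_mul' le_rfl hf2
    _ = mulV 1 W := Rh_mul_W_eq_mulV _ _

lemma anc_le_anc_mulV (m : ℕ) (W : Submodule k (MvPolynomial (Fin 2) k)) :
    anc m W ≤ anc (m + 1) (mulV 1 W) := by
  rw [anc, Ideal.span_le]
  intro p hp
  simp only [Set.mem_iUnion, SetLike.mem_coe] at hp
  obtain ⟨a, ha, hpa⟩ := hp
  rw [Finset.mem_range] at ha
  refine Ideal.subset_span ?_
  simp only [Set.mem_iUnion, SetLike.mem_coe]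
  exact ⟨a + 1, Finset.mem_range.2 (by omega), divV_le_divV_succ_mulV W hpa⟩

lemma anc_divV_le_anc {m : ℕ} (hm : 1 ≤ m) (W : Submodule k (MvPolynomial (Fin 2) k)) :
    anc (m - 1) (divV 1 m W) ≤ anc m W := by
  rw [anc, Ideal.span_le]
  intro p hp
  simp only [Set.mem_iUnion, SetLike.mem_coe] at hp
  obtain ⟨c, hc, hpc⟩ := hp
  rw [Finset.mem_range] at hc
  have : p ∈ divV (c + 1) m W := by
    rw [← divV_one_step (by omega) W]
    exact le_of_eq (divV_congr rfl rfl _) hpc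
  refine Ideal.subset_span ?_
  simp only [Set.mem_iUnion, SetLike.mem_coe]
  exact ⟨c + 1, Finset.mem_range.2 (by omega), this⟩

lemma anc_mulV_eq_iff {m : ℕ} {W : Submodule k (MvPolynomial (Fin 2) k)}
    (hW : W ≤ Rh k m) :
    anc (m + 1) (mulV 1 W) = anc m W ↔ divV 1 (m + 1) (mulV 1 W) = W := by
  constructor
  · intro h
    have h2 := (anc_eq_iff (mulV_one_le_Rh hW) hW).1 h m
    rw [cmp_self] at h2
    calc divV 1 (m + 1) (mulV 1 W)
        = ancCmp (m + 1) (mulV 1 W) (m + 1 - 1) :=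
          (cmp_of_divV (by omega) (mulV_one_le_Rh hW)).symm
      _ = ancCmp (m + 1) (mulV 1 W) m := by norm_num
      _ = W := h2
  · intro h
    rw [anc_eq_iff (mulV_one_le_Rh hW) hW]
    intro d
    by_cases hd : d ≤ m
    · have e1 : ancCmp (m + 1) (mulV 1 W) d = divV (m + 1 - d) (m + 1) (mulV 1 W) := by
        rw [← cmp_of_divV (a := m + 1 - d) (by omega) (mulV_one_le_Rh hW)]
        congr 1
        omega
      have e2 : divV (m + 1 - d) (m + 1) (mulV 1 W)
          = divV (m - d) m (divV 1 (m + 1) (mulV 1 W)) := by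
        have h3 := divV_one_step (c := m - d) (m := m + 1) (by omega) (mulV 1 W)
        rw [show m + 1 - 1 = m by omega] at h3
        rw [h3]
        exact divV_congr (by omega) rfl _
      have e3 : ancCmp m W d = divV (m - d) m W := by
        rw [← cmp_of_divV (a := m - d) (by omega) hW]
        congr 1
        omega
      rw [e1, e2, h, e3]
    · rw [cmp_of_mulV (by omega) (mulV 1 W), cmp_of_mulV (by omega) W, mulV_mulV]
      exact mulV_congr (by omega) W

lemma anc_divV_eq_iff {m : ℕ} {W : Submodule k (MvPolynomial (Fin 2) k)}
    (hm : 1 ≤ m) (hW : W ≤ Rh k m) :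
    anc (m - 1) (divV 1 m W) = anc m W ↔ mulV 1 (divV 1 m W) = W := by
  have hdW : divV 1 m W ≤ Rh k (m - 1) := divV_le_Rh 1 m W
  constructor
  · intro h
    have h2 := (anc_eq_iff hdW hW).1 h m
    rw [cmp_self] at h2
    calc mulV 1 (divV 1 m W)
        = ancCmp (m - 1) (divV 1 m W) m := by
          rw [cmp_of_mulV (by omega)]
          exact (mulV_congr (by omega) _)
      _ = W := h2
  · intro h
    rw [anc_eq_iff hdW hW]
    intro d
    by_cases hd : d ≤ m - 1
    · have e1 : ancCmp (m - 1) (divV 1 m W) d = divV (m - 1 - d) (m - 1) (divV 1 m W) := by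
        rw [← cmp_of_divV (a := m - 1 - d) (by omega) hdW]
        congr 1
        omega
      have e2 : divV (m - 1 - d) (m - 1) (divV 1 m W) = divV (m - d) m W := by
        have h3 := divV_one_step (c := m - 1 - d) (m := m) (by omega) W
        rw [h3]
        exact divV_congr (by omega) rfl _
      have e3 : ancCmp m W d = divV (m - d) m W := by
        rw [← cmp_of_divV (a := m - d) (by omega) hW]
        congr 1
        omega
      rw [e1, e2, e3]
    · calc ancCmp (m - 1) (divV 1 m W) d
          = mulV (d - (m - 1)) (divV 1 m W) := cmp_of_mulV (by omega) _
        _ = mulV (d - m) (mulV 1 (divV 1 m W)) := by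
            rw [mulV_mulV]; exact mulV_congr (by omega) _
        _ = mulV (d - m) W := by rw [h]
        _ = ancCmp m W d := (cmp_of_mulV (by omega) W).symm


lemma mulV_succ (n : ℕ) (V : Submodule k (MvPolynomial (Fin 2) k)) :
    mulV (n + 1) V = mulV 1 (mulV n V) := by
  rw [mulV_mulV]
  exact mulV_congr (Nat.add_comm 1 n).symm V

lemma mulV_le_Rh' {j : ℕ} {V : Submodule k (MvPolynomial (Fin 2) k)} (hV : V ≤ Rh k j)
    (n : ℕ) : mulV n V ≤ Rh k (j + n) :=
  le_trans (mulV_le_Rh hV) (le_of_eq (Rh_congr (by omega)))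

lemma anc_chain_pos {j : ℕ} {V : Submodule k (MvPolynomial (Fin 2) k)} (n : ℕ) :
    anc j V ≤ anc (j + n) (mulV n V) := by
  induction n with
  | zero => rw [Nat.add_zero, mulV_zero]
  | succ n ih =>
    refine le_trans ih ?_
    rw [mulV_succ n V, show j + (n + 1) = (j + n) + 1 by omega]
    exact anc_le_anc_mulV _ _

lemma pos_side {j : ℕ} {V : Submodule k (MvPolynomial (Fin 2) k)} (hV : V ≤ Rh k j)
    (n : ℕ) :
    tauZ (mulV n V) ≤ tauZ V ∧
      (tauZ (mulV n V) = tauZ V ↔ anc (j + n) (mulV n V) = anc j V) := by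
  induction n with
  | zero => rw [mulV_zero, Nat.add_zero]; exact ⟨le_rfl, by simp⟩
  | succ n ih =>
    have hWn : mulV n V ≤ Rh k (j + n) := mulV_le_Rh' hV n
    have hstep := tau_step_up hWn
    have hanc := anc_mulV_eq_iff hWn
    rw [mulV_succ n V, show j + (n + 1) = (j + n) + 1 by omega]
    refine ⟨le_trans hstep.1 ih.1, ?_, ?_⟩
    · intro h
      have e1 : tauZ (mulV n V) = tauZ V := le_antisymm ih.1 (h ▸ hstep.1)
      have e2 : tauZ (mulV 1 (mulV n V)) = tauZ (mulV n V) := by rw [h, ← e1]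
      exact (hanc.2 (hstep.2.1 e2)).trans (ih.2.1 e1)
    · intro h
      have hch : anc j V ≤ anc (j + n) (mulV n V) := anc_chain_pos n
      have hone : anc (j + n) (mulV n V) ≤ anc ((j + n) + 1) (mulV 1 (mulV n V)) :=
        anc_le_anc_mulV _ _
      have e3 : anc (j + n) (mulV n V) = anc j V := le_antisymm (h ▸ hone) hch
      have e4 : anc ((j + n) + 1) (mulV 1 (mulV n V)) = anc (j + n) (mulV n V) :=
        h.trans e3.symm
      have e5 := hstep.2.2 (hanc.1 e4)
      rw [e5]
      exact ih.2.2 e3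

lemma pos_mono {j : ℕ} {V : Submodule k (MvPolynomial (Fin 2) k)} (hV : V ≤ Rh k j) :
    ∀ n p : ℕ, n ≤ p → tauZ (mulV p V) ≤ tauZ (mulV n V) := by
  intro n p
  induction p with
  | zero =>
    intro h
    have h0 : n = 0 := by omega
    rw [h0]
  | succ p ih =>
    intro h
    rcases Nat.lt_or_ge n (p + 1) with hlt | hge
    · have h1 : tauZ (mulV (p + 1) V) ≤ tauZ (mulV p V) := by
        rw [mulV_succ]
        exact (tau_step_up (mulV_le_Rh' hV p)).1
      exact le_trans h1 (ih (by omega))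
    · have : n = p + 1 := by omega
      subst this; exact le_rfl

lemma anc_chain_neg {j : ℕ} {V : Submodule k (MvPolynomial (Fin 2) k)} (hV : V ≤ Rh k j) :
    ∀ b : ℕ, b ≤ j → anc (j - b) (divV b j V) ≤ anc j V := by
  intro b
  induction b with
  | zero => intro _; rw [divV_zero hV, Nat.sub_zero]
  | succ b ih =>
    intro hb
    rw [divV_succ hb V, show j - (b + 1) = (j - b) - 1 by omega]
    exact le_trans (anc_divV_le_anc (by omega) _) (ih (by omega))

lemma neg_side {j : ℕ} {V : Submodule k (MvPolynomial (Fin 2) k)} (hV : V ≤ Rh k j) :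
    ∀ b : ℕ, b ≤ j →
      tauZ (divV b j V) ≤ tauZ V ∧
        (tauZ (divV b j V) = tauZ V ↔ anc (j - b) (divV b j V) = anc j V) := by
  intro b
  induction b with
  | zero => intro _; rw [divV_zero hV, Nat.sub_zero]; exact ⟨le_rfl, by simp⟩
  | succ b ih =>
    intro hb
    have ihb := ih (by omega)
    have hW : divV b j V ≤ Rh k (j - b) := divV_le_Rh b j V
    have hstep := tau_step_down hW
    have hanc := anc_divV_eq_iff (by omega : 1 ≤ j - b) hW
    rw [divV_succ hb V, show j - (b + 1) = (j - b) - 1 by omega]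
    refine ⟨le_trans hstep.1 ihb.1, ?_, ?_⟩
    · intro h
      have e1 : tauZ (divV b j V) = tauZ V := le_antisymm ihb.1 (h ▸ hstep.1)
      have e2 : tauZ (divV 1 (j - b) (divV b j V)) = tauZ (divV b j V) := by rw [h, ← e1]
      exact (hanc.2 (hstep.2.1 e2)).trans (ihb.2.1 e1)
    · intro h
      have hone := anc_divV_le_anc (by omega : 1 ≤ j - b) (divV b j V)
      have hch := anc_chain_neg hV b (by omega)
      have eW : anc (j - b) (divV b j V) = anc j V := le_antisymm hch (h ▸ hone)
      have e3 : anc ((j - b) - 1) (divV 1 (j - b) (divV b j V)) = anc (j - b) (divV b j V) :=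
        h.trans eW.symm
      have e5 := hstep.2.2 (hanc.1 e3)
      rw [e5]
      exact ihb.2.2 eW

lemma neg_mono {j : ℕ} {V : Submodule k (MvPolynomial (Fin 2) k)} :
    ∀ b : ℕ, b ≤ j → ∀ c : ℕ, c ≤ b → tauZ (divV b j V) ≤ tauZ (divV c j V) := by
  intro b
  induction b with
  | zero =>
    intro _ c hc
    have h0 : c = 0 := by omega
    rw [h0]
  | succ b ih =>
    intro hb c hc
    rcases Nat.lt_or_ge c (b + 1) with hlt | hge
    · have h1 : tauZ (divV (b + 1) j V) ≤ tauZ (divV b j V) := by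
        rw [divV_succ hb V]
        exact (tau_step_down (divV_le_Rh b j V)).1
      exact le_trans h1 (ih (by omega) c (by omega))
    · have : c = b + 1 := by omega
      subst this; exact le_rfl

lemma opV_eq_divV {j : ℕ} {V : Submodule k (MvPolynomial (Fin 2) k)} (hV : V ≤ Rh k j)
    {t : ℤ} (ht : t ≤ 0) : opV j t V = divV (-t).toNat j V := by
  rcases eq_or_lt_of_le ht with rfl | hlt
  · rw [opV_zero, show ((-(0:ℤ)).toNat) = 0 by omega, divV_zero hV]
  · exact opV_neg hlt j V


/-- For `s ≥ −j`, `τ(R_sV) ≤ τ(V)`, with equality iff the ancestor ideals of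
`R_sV` and `V` coincide; moreover `s ↦ τ(R_sV)` is non-decreasing for `s ≤ 0`
and non-increasing for `s ≥ 0`. -/
theorem tau_opV_le_and_monotone (j : ℕ) (V : Submodule k (MvPolynomial (Fin 2) k))
    (hV : V ≤ Rh k j) :
    (∀ s : ℤ, -(j : ℤ) ≤ s →
      (tauZ (opV j s V) ≤ tauZ V ∧
        (tauZ (opV j s V) = tauZ V ↔ anc ((j : ℤ) + s).toNat (opV j s V) = anc j V))) ∧
    (∀ s t : ℤ, -(j : ℤ) ≤ s → s ≤ t → t ≤ 0 → tauZ (opV j s V) ≤ tauZ (opV j t V)) ∧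
    (∀ s t : ℤ, 0 ≤ s → s ≤ t → tauZ (opV j t V) ≤ tauZ (opV j s V)) := by
  refine ⟨?_, ?_, ?_⟩
  · intro s hs
    by_cases h0 : 0 ≤ s
    · rw [opV_nonneg h0, show ((j : ℤ) + s).toNat = j + s.toNat by omega]
      exact pos_side hV s.toNat
    · rw [opV_neg (by omega), show ((j : ℤ) + s).toNat = j - (-s).toNat by omega]
      exact neg_side hV (-s).toNat (by omega)
  · intro s t hs hst ht
    rw [opV_eq_divV hV (by omega : s ≤ 0), opV_eq_divV hV ht]
    exact neg_mono _ (by omega) _ (by omega)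
  · intro s t hs hst
    rw [opV_nonneg (by omega : (0:ℤ) ≤ t), opV_nonneg hs]
    exact pos_mono hV s.toNat t.toNat (by omega)
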